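/- The total number of distinct Λ-multi-twisted codes of length n over F_q equals ∏_{w=1}^r (1 + Σ_{b=1}^{ε_w} [ε_w choose b]_{q^{d_w}}), where d_w = deg g_w and ε_w = Σ_{i=1}^ℓ ε_{w,i}. -/

import Mathlib

open Polynomial Finset
open scoped Classical

noncomputable instance {F : Type*} [Field F] (f : Polynomial F) :
    Algebra (Polynomial F) (AdjoinRoot f) := Ideal.Quotient.algebra _

/-- The Gaussian (Q-binomial) coefficient, defined via the q-Pascal recurrence. -/
def gaussBinom (Q : ℕ) : ℕ → ℕ → ℕ
  | _, 0 => 1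
  | 0, _ + 1 => 0
  | k + 1, b + 1 => gaussBinom Q k b + Q ^ (b + 1) * gaussBinom Q k (b + 1)


open Module

set_option maxHeartbeats 1000000

open Finset

section PiDecomp
variable {R : Type*} [CommRing R] {ι : Type*} [Fintype ι] [DecidableEq ι]
  {M : ι → Type*} [∀ w, AddCommGroup (M w)] [∀ w, Module R (M w)]

/-- If there are "idempotent-like" scalars acting as identity on one factor and 0 on
others, submodules of the product decompose as products of submodules. -/
noncomputable def submodulePiEquiv (e : ι → R)
    (h1 : ∀ w (x : M w), e w • x = x)
    (h0 : ∀ w w', w ≠ w' → ∀ x : M w', e w • x = 0) :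
    Submodule R (∀ w, M w) ≃ (∀ w, Submodule R (M w)) where
  toFun N w := N.map (LinearMap.proj w)
  invFun p := Submodule.pi Set.univ p
  left_inv N := by
    ext x
    simp only [Submodule.mem_pi, Set.mem_univ, forall_true_left, Submodule.mem_map]
    constructor
    · intro h
      choose y hy hyx using h
      have : x = ∑ w, e w • y w := by
        funext w'
        rw [Finset.sum_apply]
        rw [Finset.sum_eq_single w']
        · rw [Pi.smul_apply, h1]; exact (hyx w').symm
        · intro w _ hw
          simp [Pi.smul_apply, h0 w w' hw]
        · simp
      rw [this]
      exact Submodule.sum_mem _ fun w _ => Submodule.smul_mem _ _ (hy w)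
    · intro hx w
      exact ⟨x, hx, rfl⟩
  right_inv p := by
    funext w
    ext y
    simp only [Submodule.mem_map]
    constructor
    · rintro ⟨x, hx, rfl⟩
      exact (Submodule.mem_pi).1 hx w (Set.mem_univ w)
    · intro hy
      refine ⟨Pi.single w y, ?_, ?_⟩
      · rw [Submodule.mem_pi]
        intro j _
        rcases eq_or_ne j w with rfl | hj
        · simpa using hy
        · simp [Pi.single_eq_of_ne hj]
      · simp [LinearMap.proj]
end PiDecomp

section RestrictSurj
variable (R S M : Type*) [CommRing R] [CommRing S] [Algebra R S]
  [AddCommGroup M] [Module S M] [Module R M] [IsScalarTower R S M]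

/-- If the algebra map is surjective, `S`-submodules and `R`-submodules coincide. -/
noncomputable def restrictScalarsEquivOfSurjective
    (h : Function.Surjective (algebraMap R S)) :
    Submodule S M ≃ Submodule R M where
  toFun p := p.restrictScalars R
  invFun p :=
    { carrier := p
      add_mem' := p.add_mem
      zero_mem' := p.zero_mem
      smul_mem' := by
        intro s x hx
        obtain ⟨r, rfl⟩ := h s
        rw [algebraMap_smul]
        exact p.smul_mem r hx }
  left_inv p := by ext x; rfl
  right_inv p := by ext x; rfl
end RestrictSurj

section CountA
variable {K : Type*} [Field K] [Fintype K]

instance fin_submodule {R M : Type*} [Semiring R] [AddCommMonoid M] [Module R M]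
    [Finite M] : Finite (Submodule R M) :=
  Finite.of_injective (fun p => (p : Set M)) SetLike.coe_injective

lemma card_submodule_congr {R M N : Type*} [Ring R] [AddCommGroup M] [Module R M]
    [AddCommGroup N] [Module R N] (e : M ≃ₗ[R] N) :
    Nat.card (Submodule R M) = Nat.card (Submodule R N) :=
  Nat.card_congr (Submodule.orderIsoMapComap e).toEquiv

/-- transport subspace-of-given-rank counts along a linear equivalence -/
lemma card_rank_congr {M N : Type*} [AddCommGroup M] [Module K M]
    [AddCommGroup N] [Module K N] (e : M ≃ₗ[K] N) (b : ℕ) :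
    Nat.card {W : Submodule K M // finrank K W = b}
      = Nat.card {W : Submodule K N // finrank K W = b} := by
  refine Nat.card_congr (Equiv.subtypeEquiv (Submodule.orderIsoMapComap e).toEquiv ?_)
  intro W
  have : W ≃ₗ[K] (Submodule.orderIsoMapComap e W) := e.submoduleMap W
  rw [this.finrank_eq]; rfl

/-- `Fin (n+1) → K` is linearly equivalent to `K × (Fin n → K)`. -/
def piFinSuccLE (n : ℕ) : (Fin (n + 1) → K) ≃ₗ[K] K × (Fin n → K) :=
  { (Fin.consEquiv (fun _ : Fin (n + 1) => K)).symm with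
    map_add' := fun _ _ => rfl
    map_smul' := fun _ _ => rfl }
end CountA

section CountA2
variable {K : Type*} [Field K] [Fintype K]
variable {M : Type*} [AddCommGroup M] [Module K M] [FiniteDimensional K M]

lemma finrank_comap_mkQ (L : Submodule K M) (U : Submodule K (M ⧸ L)) :
    finrank K (U.comap L.mkQ) = finrank K U + finrank K L := by
  set W := U.comap L.mkQ
  have hLW : L ≤ W := fun x hx => by
    have : L.mkQ x = 0 := by
      simp [Submodule.Quotient.mk_eq_zero _ |>.2 hx]
    simp only [W, Submodule.mem_comap, this, Submodule.zero_mem]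
  set f : W →ₗ[K] M ⧸ L := L.mkQ.comp W.subtype with hf
  have hrange : LinearMap.range f = U := by
    rw [hf, LinearMap.range_comp, Submodule.range_subtype]
    exact Submodule.map_comap_eq_of_surjective (Submodule.mkQ_surjective L) U
  have hker : LinearMap.ker f = L.comap W.subtype := by
    rw [hf, LinearMap.ker_comp, Submodule.ker_mkQ]
  have e1 : (LinearMap.ker f) ≃ₗ[K] L := hker ▸ Submodule.comapSubtypeEquivOfLe hLW
  have := LinearMap.finrank_range_add_finrank_ker f
  rw [hrange, e1.finrank_eq] at this
  omega
end CountA2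

section CountA3
variable {K : Type*} [Field K] [Fintype K]
variable {M : Type*} [AddCommGroup M] [Module K M] [FiniteDimensional K M]

lemma card_contains (x₀ : M) (hx : x₀ ≠ 0) (b : ℕ) :
    Nat.card {W : Submodule K M // finrank K W = b + 1 ∧ x₀ ∈ W}
      = Nat.card {U : Submodule K (M ⧸ (K ∙ x₀)) // finrank K U = b} := by
  set L : Submodule K M := K ∙ x₀ with hL
  have hL1 : finrank K L = 1 := finrank_span_singleton hx
  refine Nat.card_congr (Equiv.symm ?_)
  refine
  { toFun := fun U => ⟨U.1.comap L.mkQ, ?_, ?_⟩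
    invFun := fun W => ⟨W.1.map L.mkQ, ?_⟩
    left_inv := fun U => ?_
    right_inv := fun W => ?_ }
  · rw [finrank_comap_mkQ, U.2, hL1]
  · have : L.mkQ x₀ = 0 := by
      simp [Submodule.Quotient.mk_eq_zero _ |>.2 (Submodule.mem_span_singleton_self x₀)]
    simp only [Submodule.mem_comap, this, Submodule.zero_mem]
  · -- finrank of the image is b
    have hLW : L ≤ W.1 := (Submodule.span_singleton_le_iff_mem _ _).2 W.2.2
    have hcm : (W.1.map L.mkQ).comap L.mkQ = W.1 := by
      rw [Submodule.comap_map_eq, Submodule.ker_mkQ, sup_eq_left.2 hLW]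
    have := finrank_comap_mkQ L (W.1.map L.mkQ)
    rw [hcm, W.2.1, hL1] at this
    omega
  · ext1
    exact Submodule.map_comap_eq_of_surjective (Submodule.mkQ_surjective L) _
  · ext1
    simp only
    rw [Submodule.comap_map_eq, Submodule.ker_mkQ,
      sup_eq_left.2 ((Submodule.span_singleton_le_iff_mem _ _).2 W.2.2)]

lemma ker_snd_eq_span {N : Type*} [AddCommGroup N] [Module K N] :
    LinearMap.ker (LinearMap.snd K K N) = K ∙ ((1 : K), (0 : N)) := by
  ext ⟨a, y⟩
  simp only [LinearMap.mem_ker, LinearMap.snd_apply, Submodule.mem_span_singleton]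
  constructor
  · rintro rfl; exact ⟨a, by simp [Prod.ext_iff]⟩
  · rintro ⟨c, hc⟩
    obtain ⟨h1, h2⟩ := Prod.mk.injEq .. ▸ hc
    simpa using h2.symm

/-- quotient of `K × N` by the span of `(1,0)` is `N` -/
noncomputable def quotSpanEquiv {N : Type*} [AddCommGroup N] [Module K N] :
    ((K × N) ⧸ (K ∙ ((1 : K), (0 : N)))) ≃ₗ[K] N :=
  (Submodule.quotEquivOfEq _ _ ker_snd_eq_span.symm).trans
    (LinearMap.quotKerEquivOfSurjective (LinearMap.snd K K N)
      (fun y => ⟨(0, y), rfl⟩))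
end CountA3

section CountA4
variable {K : Type*} [Field K] [Fintype K]
variable {N : Type*} [AddCommGroup N] [Module K N] [FiniteDimensional K N] [Finite N]

instance (U : Submodule K N) : Finite (U →ₗ[K] K) :=
  Finite.of_injective (fun f => (f : U → K)) DFunLike.coe_injective

lemma card_not_contains (c : ℕ) :
    Nat.card {W : Submodule K (K × N) // finrank K W = c ∧ ((1:K),(0:N)) ∉ W}
      = Fintype.card K ^ c * Nat.card {U : Submodule K N // finrank K U = c} := by
  classical
  set x₀ : K × N := ((1:K), (0:N)) with hx₀
  -- the bijection with pairs (U, ψ)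
  set Θ : (Σ U : {U : Submodule K N // finrank K U = c}, (U.1 →ₗ[K] K)) →
      {W : Submodule K (K × N) // finrank K W = c ∧ x₀ ∉ W} := fun p =>
    ⟨LinearMap.range (p.2.prod p.1.1.subtype), by
        have hinj : Function.Injective (p.2.prod p.1.1.subtype) := by
          intro u v huv
          have := congrArg Prod.snd huv
          exact Subtype.ext this
        rw [← (LinearEquiv.ofInjective _ hinj).finrank_eq, p.1.2], by
        rintro ⟨u, hu⟩
        have h2 := congrArg Prod.snd hu
        have h1 := congrArg Prod.fst hu
        simp only [LinearMap.prod_apply, Pi.prod] at h1 h2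
        have : u = 0 := Subtype.ext (by simpa [hx₀] using h2)
        rw [this] at h1
        simp [hx₀] at h1⟩ with hΘ
  have hbij : Function.Bijective Θ := by
    constructor
    · rintro ⟨⟨U₁, h₁⟩, ψ₁⟩ ⟨⟨U₂, h₂⟩, ψ₂⟩ h
      have hr : LinearMap.range (ψ₁.prod U₁.subtype) = LinearMap.range (ψ₂.prod U₂.subtype) :=
        congrArg Subtype.val h
      have hmap : ∀ (U : Submodule K N) (ψ : U →ₗ[K] K),
          Submodule.map (LinearMap.snd K K N) (LinearMap.range (ψ.prod U.subtype)) = U := by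
        intro U ψ
        rw [← LinearMap.range_comp]
        have : (LinearMap.snd K K N).comp (ψ.prod U.subtype) = U.subtype := by
          ext u; simp
        rw [this, Submodule.range_subtype]
      have hU : U₁ = U₂ := by rw [← hmap U₁ ψ₁, ← hmap U₂ ψ₂, hr]
      subst hU
      have hψ : ψ₁ = ψ₂ := by
        ext u
        have : (ψ₁.prod U₁.subtype) u ∈ LinearMap.range (ψ₂.prod U₁.subtype) := by
          rw [← hr]; exact ⟨u, rfl⟩
        obtain ⟨v, hv⟩ := this
        have h2 := congrArg Prod.snd hv
        simp only [LinearMap.prod_apply, Pi.prod] at h2 hv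
        have : v = u := Subtype.ext h2
        rw [this] at hv
        exact (congrArg Prod.fst hv).symm
      subst hψ
      rfl
    · rintro ⟨W, hrk, hxW⟩
      set f : W →ₗ[K] N := (LinearMap.snd K K N).comp W.subtype with hf
      have hfinj : Function.Injective f := by
        rw [← LinearMap.ker_eq_bot]
        rw [Submodule.eq_bot_iff]
        rintro ⟨w, hw⟩ hker
        have h2 : w.2 = 0 := hker
        have hw1 : w.1 = 0 := by
          by_contra hne
          apply hxW
          have : x₀ = (w.1)⁻¹ • w := by
            rw [Prod.smul_def]
            rw [Prod.ext_iff]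
            constructor
            · simp [inv_mul_cancel₀ hne, hx₀]
            · simp [h2, hx₀]
          rw [this]
          exact Submodule.smul_mem _ _ hw
        refine Subtype.ext ?_
        show w = 0
        have : w = (w.1, w.2) := rfl
        rw [this, hw1, h2]; rfl
      set U : Submodule K N := W.map (LinearMap.snd K K N) with hU
      have hrange : LinearMap.range f = U := by
        rw [hf, LinearMap.range_comp, Submodule.range_subtype]
      set eW : W ≃ₗ[K] U :=
        (LinearEquiv.ofInjective f hfinj).trans (LinearEquiv.ofEq _ _ hrange) with heW
      have heW_coe : ∀ w : W, (eW w : N) = (w : K × N).2 := fun w => rfl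
      have hUrk : finrank K U = c := by rw [← eW.finrank_eq, hrk]
      set ψ : U →ₗ[K] K :=
        (LinearMap.fst K K N).comp (W.subtype.comp (eW.symm : U →ₗ[K] W)) with hψ
      refine ⟨⟨⟨U, hUrk⟩, ψ⟩, ?_⟩
      refine Subtype.ext ?_
      show LinearMap.range (ψ.prod U.subtype) = W
      have key : ∀ u : U, (ψ.prod U.subtype) u = ((eW.symm u : K × N)) := by
        intro u
        have hsnd : (u : N) = (eW.symm u : K × N).2 := by
          rw [← heW_coe (eW.symm u), eW.apply_symm_apply]
        show (ψ u, (u : N)) = _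
        refine Prod.ext ?_ ?_
        · rfl
        · exact hsnd
      apply le_antisymm
      · rintro z ⟨u, rfl⟩
        rw [key u]
        exact (eW.symm u).2
      · intro z hz
        refine ⟨eW ⟨z, hz⟩, ?_⟩
        rw [key, eW.symm_apply_apply]
  have := Nat.card_congr (Equiv.ofBijective Θ hbij)
  rw [← this]
  haveI : ∀ U : {U : Submodule K N // finrank K U = c}, Fintype (U.1 →ₗ[K] K) :=
    fun U => Fintype.ofFinite _
  haveI : Fintype {U : Submodule K N // finrank K U = c} := Fintype.ofFinite _
  rw [Nat.card_eq_fintype_card, Fintype.card_sigma]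
  have hcard : ∀ U : {U : Submodule K N // finrank K U = c},
      Fintype.card (U.1 →ₗ[K] K) = Fintype.card K ^ c := by
    intro U
    have bas : Basis (Fin c) K U.1 := Module.finBasisOfFinrankEq K U.1 U.2
    have e := (bas.constr K : (Fin c → K) ≃ₗ[K] (U.1 →ₗ[K] K))
    rw [← Fintype.card_congr e.toEquiv, Fintype.card_fun]
    simp
  rw [Finset.sum_congr rfl (fun U _ => hcard U), Finset.sum_const, Finset.card_univ,
    Nat.card_eq_fintype_card]
  ring
end CountA4

section CountA5
variable {K : Type*} [Field K] [Fintype K]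

lemma card_rank_eq_gaussBinom (n b : ℕ) :
    Nat.card {W : Submodule K (Fin n → K) // finrank K W = b}
      = gaussBinom (Fintype.card K) n b := by
  induction n generalizing b with
  | zero =>
    cases b with
    | zero =>
      rw [gaussBinom]
      haveI : Unique {W : Submodule K (Fin 0 → K) // finrank K W = 0} :=
        { default := ⟨⊥, finrank_bot K _⟩
          uniq := fun W => Subtype.ext (Subsingleton.elim _ _) }
      exact Nat.card_unique
    | succ b =>
      rw [gaussBinom]
      haveI : IsEmpty {W : Submodule K (Fin 0 → K) // finrank K W = b + 1} := by
        constructor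
        rintro ⟨W, hW⟩
        have : W = ⊥ := Subsingleton.elim _ _
        rw [this, finrank_bot] at hW
        exact Nat.succ_ne_zero b hW.symm
      exact Nat.card_of_isEmpty
  | succ n ih =>
    cases b with
    | zero =>
      rw [gaussBinom]
      haveI : Unique {W : Submodule K (Fin (n+1) → K) // finrank K W = 0} :=
        { default := ⟨⊥, finrank_bot K _⟩
          uniq := fun W => Subtype.ext ((Submodule.finrank_eq_zero).1 W.2) }
      exact Nat.card_unique
    | succ b =>
      rw [card_rank_congr (piFinSuccLE n) (b+1)]
      set x₀ : K × (Fin n → K) := ((1:K), (0 : Fin n → K)) with hx₀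
      have hx₀ne : x₀ ≠ 0 := by
        simp only [hx₀, Ne, Prod.ext_iff, not_and]
        intro h; exact absurd h one_ne_zero
      -- split by membership of x₀
      have hsplit :
          Nat.card {W : Submodule K (K × (Fin n → K)) // finrank K W = b + 1}
            = Nat.card {W : Submodule K (K × (Fin n → K)) // finrank K W = b + 1 ∧ x₀ ∈ W}
            + Nat.card {W : Submodule K (K × (Fin n → K)) // finrank K W = b + 1 ∧ x₀ ∉ W} := by
        rw [← Nat.card_sum]
        refine Nat.card_congr (Equiv.symm ?_)
        refine (Equiv.sumCongr (Equiv.subtypeSubtypeEquivSubtypeInter _ _).symm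
          (Equiv.subtypeSubtypeEquivSubtypeInter _ (fun W => x₀ ∉ W)).symm).trans ?_
        exact Equiv.sumCompl _
      rw [hsplit]
      have hA : Nat.card {W : Submodule K (K × (Fin n → K)) // finrank K W = b + 1 ∧ x₀ ∈ W}
          = gaussBinom (Fintype.card K) n b := by
        rw [card_contains x₀ hx₀ne b, ← ih b]
        exact (card_rank_congr (quotSpanEquiv (K := K) (N := Fin n → K)) b).symm ▸ rfl
      have hB : Nat.card {W : Submodule K (K × (Fin n → K)) // finrank K W = b + 1 ∧ x₀ ∉ W}
          = Fintype.card K ^ (b+1) * gaussBinom (Fintype.card K) n (b+1) := by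
        rw [card_not_contains (b+1), ih (b+1)]
      rw [hA, hB, gaussBinom]
end CountA5

section CountA6
variable {K : Type*} [Field K] [Fintype K]

lemma card_submodule_pi_eq (n : ℕ) :
    Nat.card (Submodule K (Fin n → K))
      = 1 + ∑ b ∈ Finset.Icc 1 n, gaussBinom (Fintype.card K) n b := by
  classical
  have hle : ∀ W : Submodule K (Fin n → K), finrank K W < n + 1 := by
    intro W
    have h1 : finrank K W ≤ finrank K (Fin n → K) := Submodule.finrank_le W
    have h2 : finrank K (Fin n → K) = n := by simp
    omega
  set f : Submodule K (Fin n → K) → Fin (n + 1) := fun W => ⟨finrank K W, hle W⟩ with hf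
  have := Nat.card_congr (Equiv.sigmaFiberEquiv f)
  rw [← this]
  haveI : ∀ b : Fin (n+1), Fintype {W : Submodule K (Fin n → K) // f W = b} :=
    fun b => Fintype.ofFinite _
  rw [Nat.card_eq_fintype_card, Fintype.card_sigma]
  have heq : ∀ b : Fin (n+1), Fintype.card {W : Submodule K (Fin n → K) // f W = b}
      = gaussBinom (Fintype.card K) n b := by
    intro b
    rw [← Nat.card_eq_fintype_card, ← card_rank_eq_gaussBinom n (b : ℕ)]
    refine Nat.card_congr (Equiv.subtypeEquivRight ?_)
    intro W
    constructor
    · intro h; rw [hf] at h; exact congrArg Fin.val h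
    · intro h; exact Fin.ext h
  rw [Finset.sum_congr rfl (fun b _ => heq b), Fin.sum_univ_eq_sum_range]
  rw [Finset.range_eq_Ico, Finset.sum_eq_sum_Ico_succ_bot (Nat.succ_pos n)]
  rw [gaussBinom, Nat.succ_eq_add_one, Finset.Ico_add_one_right_eq_Icc]
end CountA6


section CRT
variable {R : Type*} [CommRing R]

/-- CRT as an `R`-linear equivalence. -/
noncomputable def quotientInfLinearEquivPiQuotient {ι : Type*} [Finite ι] (I : ι → Ideal R)
    (hI : Pairwise (Function.onFun IsCoprime I)) : (R ⧸ ⨅ w, I w) ≃ₗ[R] ∀ w, R ⧸ I w :=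
  { Ideal.quotientInfRingEquivPiQuotient I hI with
    map_smul' := by
      intro r x
      obtain ⟨a, rfl⟩ := Ideal.Quotient.mk_surjective x
      show Ideal.quotientInfToPiQuotient I (r • (Ideal.Quotient.mk _ a))
        = r • Ideal.quotientInfToPiQuotient I (Ideal.Quotient.mk _ a)
      have h1 : r • (Ideal.Quotient.mk (⨅ w, I w) a) = Ideal.Quotient.mk _ (r * a) := rfl
      rw [h1, Ideal.quotientInfToPiQuotient_mk, Ideal.quotientInfToPiQuotient_mk]
      funext w
      show (Ideal.Quotient.mk (I w)) (r * a) = r • (Ideal.Quotient.mk (I w)) a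
      rfl }

lemma span_prod_eq_iInf {ι : Type*} [Fintype ι] (p : ι → R)
    (h : Pairwise (Function.onFun IsCoprime p)) :
    Ideal.span {∏ w, p w} = ⨅ w, Ideal.span {p w} := by
  classical
  have key : ∀ s : Finset ι, Ideal.span {∏ w ∈ s, p w} = ⨅ w ∈ s, Ideal.span {p w} := by
    intro s
    induction s using Finset.induction with
    | empty => simp [Ideal.span_singleton_one]
    | @insert a s ha ih =>
      rw [Finset.prod_insert ha]
      have hcop : IsCoprime (p a) (∏ w ∈ s, p w) :=
        IsCoprime.prod_right fun w hw => h (fun hne => ha (hne ▸ hw))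
      rw [← Ideal.span_singleton_mul_span_singleton,
        ← Ideal.inf_eq_mul_of_isCoprime ((Ideal.isCoprime_span_singleton_iff _ _).2 hcop),
        ih, Finset.iInf_insert]
  rw [key Finset.univ]
  simp
end CRT

section Poly
variable {F : Type*} [Field F]

lemma isCoprime_of_monic_irred {a b : F[X]} (ha : Irreducible a) (hb : Irreducible b)
    (hma : a.Monic) (hmb : b.Monic) (hne : a ≠ b) : IsCoprime a b := by
  rw [ha.coprime_iff_not_dvd]
  intro hdvd
  exact hne (Polynomial.eq_of_monic_of_associated hma hmb (ha.associated_of_dvd hb hdvd))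

lemma poly_smul_adjoinRoot (f p : F[X]) (y : AdjoinRoot f) :
    p • y = AdjoinRoot.mk f p * y := by
  rw [Algebra.smul_def]
  rfl
end Poly

section Decomp
variable {F : Type*} [Field F] {r : ℕ}

noncomputable def adjoinRootPiEquiv (g : Fin r → F[X]) (f : F[X]) (S : Fin r → Prop)
    (hfi : f = ∏ w : {w // S w}, g w.1)
    (hcop : Pairwise (Function.onFun IsCoprime fun w : {w // S w} => g w.1)) :
    AdjoinRoot f ≃ₗ[F[X]] ∀ w : {w // S w}, AdjoinRoot (g w.1) := by
  have hspan : (Ideal.span {f} : Ideal F[X]) = ⨅ w : {w // S w}, Ideal.span {g w.1} := by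
    rw [hfi]
    exact span_prod_eq_iInf _ hcop
  exact (Submodule.quotEquivOfEq _ _ hspan).trans
    (quotientInfLinearEquivPiQuotient _
      (fun w w' hne => (Ideal.isCoprime_span_singleton_iff _ _).2 (hcop hne)))
end Decomp

/-- The total number of distinct `Λ`-multi-twisted codes of length `n` over `F_q`
(i.e. `F_q[x]`-submodules of `V = ∏_i F_q[x]/⟨x^{m_i}−λ_i⟩`) equals
`∏_{w=1}^r (1 + Σ_{b=1}^{ε_w} [ε_w choose b]_{q^{d_w}})`, where `d_w = deg g_w` and
`ε_w = Σ_i ε_{w,i}`. -/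
theorem multiTwisted_code_count (F : Type*) [Field F] [Fintype F]
    (q ℓ r : ℕ) (hq : Fintype.card F = q)
    (m : Fin ℓ → ℕ) (hm : ∀ i, 0 < m i)
    (hco : ∀ i, Nat.Coprime (m i) q)
    (Λ : Fin ℓ → F) (hΛ : ∀ i, Λ i ≠ 0)
    (g : Fin r → Polynomial F) (hirr : ∀ w, Irreducible (g w))
    (hmon : ∀ w, (g w).Monic) (hdist : Function.Injective g)
    (ε : Fin r → Fin ℓ → ℕ)
    (hε : ∀ w i, ε w i = if g w ∣ (X ^ m i - C (Λ i)) then 1 else 0)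
    (hfact : ∀ i, (X : Polynomial F) ^ m i - C (Λ i) = ∏ w, g w ^ ε w i) :
    Nat.card (Submodule (Polynomial F)
        (∀ i, AdjoinRoot ((X : Polynomial F) ^ m i - C (Λ i))))
      = ∏ w, (1 + ∑ b ∈ Finset.Icc 1 (∑ i, ε w i),
          gaussBinom (q ^ (g w).natDegree) (∑ i, ε w i) b) := by
  classical
  subst hq
  set f : Fin ℓ → F[X] := fun i => X ^ m i - C (Λ i) with hfdef
  have hε01 : ∀ w i, ε w i = 0 ∨ ε w i = 1 := by
    intro w i; rw [hε]; split
    · right; rfl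
    · left; rfl
  have hgne : ∀ w w' : Fin r, w ≠ w' → IsCoprime (g w) (g w') := fun w w' hne =>
    isCoprime_of_monic_irred (hirr w) (hirr w') (hmon w) (hmon w') (fun h => hne (hdist h))
  have hfi : ∀ i, f i = ∏ w : {w // ε w i = 1}, g w.1 := by
    intro i
    have h0 : f i = ∏ w, g w ^ ε w i := hfact i
    rw [h0, ← Finset.prod_filter_mul_prod_filter_not Finset.univ (fun w => ε w i = 1)]
    have h2 : ∏ w ∈ Finset.univ.filter (fun w => ¬ ε w i = 1), g w ^ ε w i = 1 :=
      Finset.prod_eq_one (fun w hw => by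
        rcases hε01 w i with h | h
        · rw [h, pow_zero]
        · exact absurd h (Finset.mem_filter.1 hw).2)
    have h1 : ∏ w ∈ Finset.univ.filter (fun w => ε w i = 1), g w ^ ε w i
        = ∏ w ∈ Finset.univ.filter (fun w => ε w i = 1), g w :=
      Finset.prod_congr rfl (fun w hw => by rw [(Finset.mem_filter.1 hw).2, pow_one])
    rw [h1, h2, mul_one]
    exact Finset.prod_subtype _ (fun w => by simp) g
  have E1 : ∀ i, AdjoinRoot (f i) ≃ₗ[F[X]] ∀ w : {w // ε w i = 1}, AdjoinRoot (g w.1) :=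
    fun i => adjoinRootPiEquiv g (f i) _ ((hfi i).trans (by congr!))
      (fun w w' hne => hgne w.1 w'.1 (fun h => hne (Subtype.ext h)))
  let σ : (Σ i, {w // ε w i = 1}) ≃ (Σ w : Fin r, {i // ε w i = 1}) :=
    { toFun := fun p => ⟨p.2.1, p.1, p.2.2⟩
      invFun := fun p => ⟨p.2.1, p.1, p.2.2⟩
      left_inv := fun ⟨i, w, h⟩ => rfl
      right_inv := fun ⟨w, i, h⟩ => rfl }
  let Echain : (∀ i, AdjoinRoot (f i)) ≃ₗ[F[X]]
      ∀ w : Fin r, ({i // ε w i = 1} → AdjoinRoot (g w)) :=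
    (LinearEquiv.piCongrRight E1).trans
      (((LinearEquiv.piCurry F[X]
          (fun i (w : {w // ε w i = 1}) => AdjoinRoot (g w.1))).symm).trans
        ((LinearEquiv.piCongrLeft' F[X]
            (fun p : Σ i, {w // ε w i = 1} => AdjoinRoot (g p.2.1)) σ).trans
          (LinearEquiv.piCurry F[X] (fun w (_ : {i // ε w i = 1}) => AdjoinRoot (g w)))))
  have hcp : ∀ w, IsCoprime (g w) (∏ w' ∈ Finset.univ.erase w, g w') := fun w =>
    IsCoprime.prod_right (fun w' hw' => hgne w w' (Finset.ne_of_mem_erase hw').symm)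
  choose u v huv using hcp
  set e : Fin r → F[X] := fun w => v w * ∏ w' ∈ Finset.univ.erase w, g w' with he
  have hmk1 : ∀ w, AdjoinRoot.mk (g w) (e w) = 1 := by
    intro w
    have h : e w = 1 - u w * g w := by
      rw [he, eq_sub_iff_add_eq, add_comm]
      exact huv w
    rw [h, map_sub, map_one, map_mul, AdjoinRoot.mk_self, mul_zero, sub_zero]
  have h1 : ∀ w (x : {i // ε w i = 1} → AdjoinRoot (g w)), e w • x = x := by
    intro w x; funext j
    show e w • x j = x j
    rw [poly_smul_adjoinRoot, hmk1, one_mul]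
  have h0 : ∀ w w', w ≠ w' → ∀ x : {i // ε w' i = 1} → AdjoinRoot (g w'), e w • x = 0 := by
    intro w w' hne x; funext j
    show e w • x j = 0
    rw [poly_smul_adjoinRoot]
    have hz : AdjoinRoot.mk (g w') (e w) = 0 := by
      rw [AdjoinRoot.mk_eq_zero]
      exact Dvd.dvd.mul_left
        (Finset.dvd_prod_of_mem g (Finset.mem_erase.2 ⟨hne.symm, Finset.mem_univ _⟩)) (v w)
    rw [hz, zero_mul]
  rw [card_submodule_congr Echain, Nat.card_congr (submodulePiEquiv e h1 h0), Nat.card_pi]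
  refine Finset.prod_congr rfl (fun w _ => ?_)
  haveI : Fact (Irreducible (g w)) := ⟨hirr w⟩
  haveI : Finite (AdjoinRoot (g w)) :=
    Finite.of_equiv _ (AdjoinRoot.powerBasis' (hmon w)).basis.equivFun.symm.toEquiv
  haveI : Fintype (AdjoinRoot (g w)) := Fintype.ofFinite _
  have hsurj : Function.Surjective (algebraMap F[X] (AdjoinRoot (g w))) := fun y => by
    obtain ⟨a, rfl⟩ := AdjoinRoot.mk_surjective y; exact ⟨a, rfl⟩
  have hcardT : Fintype.card {i // ε w i = 1} = ∑ i, ε w i := by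
    rw [Fintype.card_subtype, Finset.card_filter]
    refine Finset.sum_congr rfl (fun i _ => ?_)
    rcases hε01 w i with h | h <;> rw [h] <;> simp
  have hcardK : Fintype.card (AdjoinRoot (g w)) = Fintype.card F ^ (g w).natDegree := by
    have hfr : finrank F (AdjoinRoot (g w)) = (g w).natDegree := by
      rw [finrank_eq_card_basis (AdjoinRoot.powerBasis' (hmon w)).basis, Fintype.card_fin]; rfl
    rw [card_eq_pow_finrank (K := F), hfr]
  calc Nat.card (Submodule F[X] ({i // ε w i = 1} → AdjoinRoot (g w)))
      = Nat.card (Submodule (AdjoinRoot (g w)) ({i // ε w i = 1} → AdjoinRoot (g w))) :=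
        (Nat.card_congr (restrictScalarsEquivOfSurjective F[X] (AdjoinRoot (g w)) _ hsurj)).symm
    _ = Nat.card (Submodule (AdjoinRoot (g w)) (Fin (∑ i, ε w i) → AdjoinRoot (g w))) :=
        card_submodule_congr (LinearEquiv.funCongrLeft (AdjoinRoot (g w)) (AdjoinRoot (g w))
          (Fintype.equivFinOfCardEq hcardT).symm)
    _ = 1 + ∑ b ∈ Finset.Icc 1 (∑ i, ε w i),
          gaussBinom (Fintype.card (AdjoinRoot (g w))) (∑ i, ε w i) b :=
        card_submodule_pi_eq _
    _ = 1 + ∑ b ∈ Finset.Icc 1 (∑ i, ε w i),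
          gaussBinom (Fintype.card F ^ (g w).natDegree) (∑ i, ε w i) b := by rw [hcardK]
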